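/- Let c ∈ ℝ^n, G ∈ ℝ^{n×D}, δ ∈ ℝ^D with δ ≥ 0 componentwise, Δ = diag(δ), F ∈ ℝ^{q×n}, and θ ∈ ℝ^q. Then the scaled zonotope ⟨c, GΔ⟩ is contained in the polyhedron {x ∈ ℝ^n : F x ≤ θ} if and only if F c + |F G| δ ≤ θ componentwise, where |F G| is the entrywise absolute value of the matrix F G. -/

import Mathlib

open Matrix BigOperators

/-- The zonotope `⟨c, G⟩ = {c + Gξ : ‖ξ‖_∞ ≤ 1}` (sup norm on the Pi type). -/
def zonotope {d D : Type*} [Fintype d] [Fintype D]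
    (c : d → ℝ) (G : Matrix d D ℝ) : Set (d → ℝ) :=
  {x | ∃ ξ : D → ℝ, ‖ξ‖ ≤ 1 ∧ x = c + G.mulVec ξ}

lemma key_entry {n D q : ℕ} (G : Matrix (Fin n) (Fin D) ℝ) (δ : Fin D → ℝ)
    (F : Matrix (Fin q) (Fin n) ℝ) (ξ : Fin D → ℝ) (i : Fin q) :
    F.mulVec ((G * Matrix.diagonal δ).mulVec ξ) i
      = ∑ j, (F * G) i j * δ j * ξ j := by
  rw [Matrix.mulVec_mulVec, ← Matrix.mul_assoc]
  simp [Matrix.mulVec, dotProduct, Matrix.mul_diagonal]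

/-- A scaled zonotope `⟨c, GΔ⟩` is contained in the polyhedron `{x : Fx ≤ θ}` iff
`F c + |F G| δ ≤ θ` componentwise. -/
theorem scaled_zonotope_subset_polyhedron_iff
    {n D q : ℕ}
    (c : Fin n → ℝ) (G : Matrix (Fin n) (Fin D) ℝ)
    (δ : Fin D → ℝ) (hδ : ∀ j, 0 ≤ δ j)
    (F : Matrix (Fin q) (Fin n) ℝ) (θ : Fin q → ℝ) :
    zonotope c (G * Matrix.diagonal δ) ⊆ {x | ∀ i, F.mulVec x i ≤ θ i}
    ↔ ∀ i, F.mulVec c i + ∑ j, |(F * G) i j| * δ j ≤ θ i := by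
  constructor
  · intro h i
    set ξ : Fin D → ℝ := fun j => if 0 ≤ (F * G) i j then 1 else -1 with hξdef
    have hξ : ‖ξ‖ ≤ 1 := by
      rw [pi_norm_le_iff_of_nonneg (by norm_num)]
      intro j
      simp only [hξdef, Real.norm_eq_abs]
      split <;> norm_num
    have hmem : c + (G * Matrix.diagonal δ).mulVec ξ ∈
        zonotope c (G * Matrix.diagonal δ) := ⟨ξ, hξ, rfl⟩
    have := h hmem i
    rw [Matrix.mulVec_add, Pi.add_apply, key_entry] at this
    refine le_trans (le_of_eq ?_) this
    congr 1
    refine Finset.sum_congr rfl fun j _ => ?_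
    simp only [hξdef]
    split
    · rename_i hsgn; rw [abs_of_nonneg hsgn]; ring
    · rename_i hsgn; rw [abs_of_neg (lt_of_not_ge hsgn)]; ring
  · rintro h x ⟨ξ, hξ, rfl⟩ i
    refine le_trans ?_ (h i)
    rw [Matrix.mulVec_add, Pi.add_apply, key_entry]
    refine add_le_add_right (Finset.sum_le_sum fun j _ => ?_) _
    calc (F * G) i j * δ j * ξ j ≤ |(F * G) i j * δ j * ξ j| := le_abs_self _
      _ = |(F * G) i j| * δ j * |ξ j| := by
          rw [abs_mul, abs_mul, abs_of_nonneg (hδ j)]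
      _ ≤ |(F * G) i j| * δ j * 1 := by
          refine mul_le_mul_of_nonneg_left ?_ (mul_nonneg (abs_nonneg _) (hδ j))
          rw [← Real.norm_eq_abs]
          exact (norm_le_pi_norm ξ j).trans hξ
      _ = |(F * G) i j| * δ j := mul_one _
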